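/- Let P be a program, Y an interpretation, and H, B ⊆ U alphabets. If there exists a program R ∈ C_{⟨H,B⟩} (all head atoms in H, all body atoms in B) such that Y is an answer set of P ∪ R, then Y is an H-total model of P, i.e., Y ⊨ P and every Z ⊂ Y with Z ⊨ P^Y satisfies Z∩H ⊂ Y∩H. -/

import Mathlib

structure Rule (α : Type*) where
  head : Finset α
  pbody : Finset α
  nbody : Finset α
deriving DecidableEq

abbrev Program (α : Type*) := Finset (Rule α)

variable {α : Type*} [DecidableEq α]

/-- An interpretation `Y` satisfies a rule. -/
def satRule (Y : Finset α) (r : Rule α) : Prop :=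
  r.pbody ⊆ Y → r.nbody ∩ Y = ∅ → (r.head ∩ Y).Nonempty

/-- `Y` is a model of the program `P`. -/
def satProg (Y : Finset α) (P : Program α) : Prop := ∀ r ∈ P, satRule Y r

/-- The Gelfond–Lifschitz reduct `P^Y`. -/
def reduct (P : Program α) (Y : Finset α) : Program α :=
  (P.filter (fun r => r.nbody ∩ Y = ∅)).image (fun r => ⟨r.head, r.pbody, ∅⟩)

/-- `Y` is an answer set of `P`: a minimal model of `P^Y`. -/
def isAS (P : Program α) (Y : Finset α) : Prop :=
  satProg Y (reduct P Y) ∧ ∀ Z, Z ⊂ Y → ¬ satProg Z (reduct P Y)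

def heads (P : Program α) : Finset α := P.biUnion Rule.head
def bodies (P : Program α) : Finset α := P.biUnion (fun r => r.pbody ∪ r.nbody)

/-- A positive program: no default negation. -/
def Positive (P : Program α) : Prop := ∀ r ∈ P, r.nbody = ∅

/-- A unary program: only facts `a ←` and rules `a ← b`. -/
def Unary (P : Program α) : Prop :=
  ∀ r ∈ P, r.nbody = ∅ ∧ r.head.card = 1 ∧ r.pbody.card ≤ 1

/-- Membership in the class `C_⟨H,B⟩`. -/
def inClass (H B : Finset α) (P : Program α) : Prop := heads P ⊆ H ∧ bodies P ⊆ B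

/-- `V ⪯_H^B Z`. -/
def preceq (H B V Z : Finset α) : Prop := V ∩ H ⊆ Z ∩ H ∧ Z ∩ B ⊆ V ∩ B

/-- `V ≺_H^B Z`. -/
def prec (H B V Z : Finset α) : Prop := preceq H B V Z ∧ V ∩ (H ∪ B) ≠ Z ∩ (H ∪ B)

/-- `Y` is an `H`-total model of `P`. -/
def Htotal (H : Finset α) (P : Program α) (Y : Finset α) : Prop :=
  satProg Y P ∧ ∀ Z, Z ⊂ Y → satProg Z (reduct P Y) → Z ∩ H ⊂ Y ∩ H

/-- The containment `P ⊆_⟨H,B⟩ Q`. -/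
def containsHB (H B : Finset α) (P Q : Program α) : Prop :=
  ∀ R : Program α, inClass H B R → ∀ Y, isAS (P ∪ R) Y → isAS (Q ∪ R) Y

/-- The equivalence `P ≡_⟨H,B⟩ Q`. -/
def equivHB (H B : Finset α) (P Q : Program α) : Prop :=
  ∀ R : Program α, inClass H B R → ∀ Y, isAS (P ∪ R) Y ↔ isAS (Q ∪ R) Y

/-- A witness against `P ⊆_⟨H,B⟩ Q`. -/
def Witness (H B : Finset α) (P Q : Program α) (X Y : Finset α) : Prop :=
  X ⊆ Y ∧ Htotal H P Y ∧
    (satProg Y Q → X ⊂ Y ∧ satProg X (reduct Q Y) ∧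
      ∀ X', preceq H B X X' → X' ⊂ Y → ¬ satProg X' (reduct P Y))

/-- `(X,Y)` is `⪯_H^B`-maximal for `P`. -/
def maximalHB (H B : Finset α) (P : Program α) (X Y : Finset α) : Prop :=
  satProg X (reduct P Y) ∧ ∀ X', prec H B X X' → X' ⊂ Y → ¬ satProg X' (reduct P Y)

/-- `(X,Y)` is an `⟨H,B⟩`-model of `P`. -/
def HBmodel (H B : Finset α) (P : Program α) (X Y : Finset α) : Prop :=
  X ⊆ Y ∧ Htotal H P Y ∧
    (X ⊂ Y → ∃ X', X' ⊂ Y ∧ X' ∩ (H ∪ B) = X ∧ maximalHB H B P X' Y)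

theorem answer_set_extension_Htotal (P : Program α) (Y H B : Finset α)
    (h : ∃ R : Program α, inClass H B R ∧ isAS (P ∪ R) Y) :
    Htotal H P Y := by
  obtain ⟨R, ⟨hH, _⟩, hsat, hmin⟩ := h
  have hred : reduct (P ∪ R) Y = reduct P Y ∪ reduct R Y := by
    simp [reduct, Finset.filter_union, Finset.image_union]
  constructor
  · intro r hr hp hn
    have hmem : (⟨r.head, r.pbody, ∅⟩ : Rule α) ∈ reduct (P ∪ R) Y := by
      simp only [reduct, Finset.mem_image, Finset.mem_filter]
      exact ⟨r, ⟨Finset.mem_union_left _ hr, hn⟩, rfl⟩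
    exact hsat ⟨r.head, r.pbody, ∅⟩ hmem hp (by simp)
  · intro Z hZ hZsat
    refine Finset.ssubset_iff_subset_ne.mpr
      ⟨Finset.inter_subset_inter_right hZ.subset, fun heq => ?_⟩
    apply hmin Z hZ
    rw [hred]
    intro r hr
    rcases Finset.mem_union.mp hr with h1 | h2
    · exact hZsat r h1
    · simp only [reduct, Finset.mem_image, Finset.mem_filter] at h2
      obtain ⟨r0, ⟨hr0, hn0⟩, rfl⟩ := h2
      intro hp _
      have hpy : r0.pbody ⊆ Y := hp.trans hZ.subset
      have hmem : (⟨r0.head, r0.pbody, ∅⟩ : Rule α) ∈ reduct (P ∪ R) Y := by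
        simp only [reduct, Finset.mem_image, Finset.mem_filter]
        exact ⟨r0, ⟨Finset.mem_union_right _ hr0, hn0⟩, rfl⟩
      obtain ⟨a, ha⟩ := hsat _ hmem hpy (by simp)
      simp only [Finset.mem_inter] at ha
      have haH : a ∈ H := hH (Finset.mem_biUnion.mpr ⟨r0, hr0, ha.1⟩)
      have haZ : a ∈ Z := by
        have : a ∈ Y ∩ H := Finset.mem_inter.mpr ⟨ha.2, haH⟩
        rw [← heq] at this
        exact (Finset.mem_inter.mp this).1
      exact ⟨a, Finset.mem_inter.mpr ⟨ha.1, haZ⟩⟩
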